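/- Let n ≥ 1, let a = (a₁,...,aₙ) ∈ ℝⁿ be a nonzero vector, and let b ∈ ℝ. Suppose X̂ is a real symmetric positive semidefinite 2n×2n matrix satisfying: X̂_{ii} = 1 for all i ∈ {1,...,n}; X̂_{2n,2n} = b; a₁²X̂_{1,1} − 2a₁X̂_{1,n+1} + X̂_{n+1,n+1} = 0; and for every i with 2 ≤ i ≤ n, [a_i, 1, −1] X̂_{(i,n+i−1,n+i),(i,n+i−1,n+i)} [a_i; 1; −1] = 0. Then the matrix X := X̂_{1:n,1:n} satisfies X_{ii} = 1 for all i ∈ {1,...,n} and aᵀXa = b. -/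

import Mathlib

open Matrix

noncomputable section

/-- The quadratic form `[c, 1, −1] Y [c; 1; −1]` on the `3×3` principal submatrix of `X`
on rows/columns `r1, r2, r3`, written out entrywise. -/
def triQuad {m : Type*} (c : ℝ) (X : Matrix m m ℝ) (r1 r2 r3 : m) : ℝ :=
  c * c * X r1 r1 + c * X r1 r2 - c * X r1 r3
    + c * X r2 r1 + X r2 r2 - X r2 r3
    - c * X r3 r1 - X r3 r2 + X r3 r3

lemma psd_pair_kernel {m : Type*} [Fintype m] [DecidableEq m] {M : Matrix m m ℝ}
    (hM : M.PosSemidef) (c : ℝ) {i1 i2 : m}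
    (h : c^2 * M i1 i1 - 2*c * M i1 i2 + M i2 i2 = 0) :
    ∀ j, c * M j i1 - M j i2 = 0 := by
  have hsym : M i2 i1 = M i1 i2 := by
    have := hM.isHermitian.apply i1 i2
    simpa using this
  set w : m → ℝ := fun l => (if l = i1 then c else 0) + (if l = i2 then -1 else 0) with hw
  have hmv : ∀ j, (M *ᵥ w) j = c * M j i1 - M j i2 := by
    intro j
    simp [mulVec, dotProduct, hw, mul_add, mul_ite, Finset.sum_add_distrib]
    ring
  have hq : star w ⬝ᵥ (M *ᵥ w) = 0 := by
    have h2 : star w ⬝ᵥ (M *ᵥ w) = c * (M *ᵥ w) i1 - (M *ᵥ w) i2 := by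
      simp [dotProduct, hw, add_mul, ite_mul, Finset.sum_add_distrib]
      ring
    rw [h2, hmv, hmv, hsym]
    nlinarith [h]
  have h0 := (hM.dotProduct_mulVec_zero_iff w).mp hq
  intro j
  rw [← hmv j, h0]
  rfl

lemma psd_tri_kernel {m : Type*} [Fintype m] [DecidableEq m] {M : Matrix m m ℝ}
    (hM : M.PosSemidef) (c : ℝ) {i1 i2 i3 : m}
    (h12 : i1 ≠ i2) (h13 : i1 ≠ i3) (h23 : i2 ≠ i3)
    (h : triQuad c M i1 i2 i3 = 0) :
    ∀ j, c * M j i1 + M j i2 - M j i3 = 0 := by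
  set w : m → ℝ := fun l => (if l = i1 then c else 0) + (if l = i2 then 1 else 0)
      + (if l = i3 then -1 else 0) with hw
  have hmv : ∀ j, (M *ᵥ w) j = c * M j i1 + M j i2 - M j i3 := by
    intro j
    simp [mulVec, dotProduct, hw, mul_add, mul_ite, Finset.sum_add_distrib]
    ring
  have hq : star w ⬝ᵥ (M *ᵥ w) = 0 := by
    have h2 : star w ⬝ᵥ (M *ᵥ w) = c * (M *ᵥ w) i1 + (M *ᵥ w) i2 - (M *ᵥ w) i3 := by
      simp [dotProduct, hw, add_mul, ite_mul, Finset.sum_add_distrib, h12, h13, h23,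
        h12.symm, h13.symm, h23.symm]
      ring
    rw [h2, hmv, hmv, hmv, ← h]
    simp [triQuad]; ring
  have h0 := (hM.dotProduct_mulVec_zero_iff w).mp hq
  intro j
  rw [← hmv j, h0]
  rfl

lemma sum_ite_succ {n k : ℕ} (hk : k + 1 < n) (f : Fin n → ℝ) :
    (∑ i : Fin n, if (i : ℕ) ≤ k + 1 then f i else 0)
    = (∑ i : Fin n, if (i : ℕ) ≤ k then f i else 0) + f ⟨k+1, hk⟩ := by
  have h : ∀ i : Fin n,
      (if (i : ℕ) ≤ k + 1 then f i else 0)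
      = (if (i : ℕ) ≤ k then f i else 0) + (if i = ⟨k+1, hk⟩ then f i else 0) := by
    intro i
    by_cases h1 : (i : ℕ) ≤ k
    · have h2 : i ≠ ⟨k+1, hk⟩ := by
        intro he; rw [he] at h1; simp at h1
      simp [h1, h2, le_trans h1 (Nat.le_succ k)]
    · by_cases h2 : i = ⟨k+1, hk⟩
      · subst h2; simp [h1]
      · have h3 : ¬ ((i : ℕ) ≤ k + 1) := by
          intro hle
          exact h2 (Fin.ext (by simp; omega))
        simp [h1, h2, h3]
  rw [Finset.sum_congr rfl (fun i _ => h i), Finset.sum_add_distrib,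
    Finset.sum_ite_eq' Finset.univ (⟨k+1, hk⟩ : Fin n)]
  simp

/-- canonical embedding of the first block of indices -/
def emb (n : ℕ) (hn : 1 ≤ n) (i : Fin n) : Fin (2*n) := ⟨(i : ℕ), Nat.lt_of_lt_of_le i.2 (by omega)⟩

/-- canonical index `n + k` -/
def colIdx (n k : ℕ) (hk : k < n) : Fin (2*n) := ⟨n + k, by omega⟩

set_option maxHeartbeats 1000000 in
/-- If `X̂` is a symmetric PSD `2n×2n` matrix satisfying the sparse extension constraints of
the simple example, then its top-left `n×n` block has unit diagonal and satisfies
`aᵀXa = b`. -/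
theorem sparse_extension_to_original (n : ℕ) (hn : 1 ≤ n)
    (a : Fin n → ℝ) (ha : a ≠ 0) (b : ℝ)
    (Xh : Matrix (Fin (2*n)) (Fin (2*n)) ℝ) (hpsd : Xh.PosSemidef)
    (hdiag : ∀ i : Fin n, Xh ⟨(i : ℕ), by omega⟩ ⟨(i : ℕ), by omega⟩ = 1)
    (hlast : Xh ⟨2*n - 1, by omega⟩ ⟨2*n - 1, by omega⟩ = b)
    (hfirst : a ⟨0, by omega⟩ ^ 2 * Xh ⟨0, by omega⟩ ⟨0, by omega⟩
        - 2 * a ⟨0, by omega⟩ * Xh ⟨0, by omega⟩ ⟨n, by omega⟩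
        + Xh ⟨n, by omega⟩ ⟨n, by omega⟩ = 0)
    (hrec : ∀ i : Fin n, 1 ≤ (i : ℕ) →
      triQuad (a i) Xh ⟨(i : ℕ), by omega⟩ ⟨n + (i : ℕ) - 1, by omega⟩
        ⟨n + (i : ℕ), by omega⟩ = 0) :
    (∀ i : Fin n, Xh ⟨(i : ℕ), by omega⟩ ⟨(i : ℕ), by omega⟩ = 1) ∧
    (∑ i : Fin n, ∑ j : Fin n,
      a i * Xh ⟨(i : ℕ), by omega⟩ ⟨(j : ℕ), by omega⟩ * a j) = b := by
  have hsym : ∀ p q : Fin (2*n), Xh p q = Xh q p := by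
    intro p q
    have := hpsd.isHermitian.apply q p
    simpa using this
  -- key induction
  have key : ∀ k : ℕ, ∀ hk : k < n, ∀ j : Fin (2*n),
      Xh j (colIdx n k hk)
        = ∑ i : Fin n, (if (i : ℕ) ≤ k then a i * Xh j (emb n hn i) else 0) := by
    intro k
    induction k with
    | zero =>
      intro hk j
      have h0 := psd_pair_kernel hpsd (a ⟨0, by omega⟩)
        (i1 := emb n hn ⟨0, by omega⟩) (i2 := colIdx n 0 hk) hfirst j
      have hsum : ∑ i : Fin n, (if (i : ℕ) ≤ 0 then a i * Xh j (emb n hn i) else 0)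
          = a ⟨0, by omega⟩ * Xh j (emb n hn ⟨0, by omega⟩) := by
        rw [Finset.sum_eq_single (⟨0, by omega⟩ : Fin n)]
        · simp
        · intro i _ hne
          have : ¬ ((i : ℕ) ≤ 0) := by
            intro hle
            exact hne (Fin.ext (by simp; omega))
          simp [this]
        · simp
      rw [hsum]
      linarith [h0]
    | succ k ih =>
      intro hk j
      have hk' : k < n := by omega
      have hq := hrec ⟨k + 1, hk⟩ (by simp)
      have e1 : (⟨((⟨k+1, hk⟩ : Fin n) : ℕ), by omega⟩ : Fin (2*n))
          = emb n hn ⟨k+1, hk⟩ := rfl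
      have e2 : (⟨n + ((⟨k+1, hk⟩ : Fin n) : ℕ) - 1, by omega⟩ : Fin (2*n))
          = colIdx n k hk' := Fin.ext (by simp [colIdx]; try omega)
      have e3 : (⟨n + ((⟨k+1, hk⟩ : Fin n) : ℕ), by omega⟩ : Fin (2*n))
          = colIdx n (k+1) hk := Fin.ext (by simp [colIdx])
      rw [e1, e2, e3] at hq
      have htri := psd_tri_kernel hpsd (a ⟨k+1, hk⟩)
        (i1 := emb n hn ⟨k+1, hk⟩) (i2 := colIdx n k hk') (i3 := colIdx n (k+1) hk)
        (by simp only [ne_eq, emb, colIdx, Fin.mk.injEq]; omega)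
        (by simp only [ne_eq, emb, colIdx, Fin.mk.injEq]; omega)
        (by simp only [ne_eq, colIdx, Fin.mk.injEq]; omega) hq j
      have ihj := ih hk' j
      have hsplit := sum_ite_succ hk (fun i : Fin n => a i * Xh j (emb n hn i))
      rw [hsplit, ← ihj]
      linarith [htri]
  -- assemble
  have hL : (⟨2*n - 1, by omega⟩ : Fin (2*n)) = colIdx n (n-1) (by omega) :=
    Fin.ext (by simp [colIdx]; omega)
  have keyfull : ∀ j : Fin (2*n),
      Xh j ⟨2*n - 1, by omega⟩ = ∑ i : Fin n, a i * Xh j (emb n hn i) := by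
    intro j
    rw [hL, key (n-1) (by omega) j]
    refine Finset.sum_congr rfl fun i _ => ?_
    have : (i : ℕ) ≤ n - 1 := by omega
    simp [this]
  refine ⟨hdiag, ?_⟩
  have hb : b = ∑ i : Fin n, a i * Xh ⟨2*n-1, by omega⟩ (emb n hn i) := by
    rw [← hlast, keyfull]
  rw [hb]
  refine Finset.sum_congr rfl fun i _ => ?_
  have hrow : Xh (⟨2*n-1, by omega⟩ : Fin (2*n)) (emb n hn i)
      = Xh (emb n hn i) ⟨2*n-1, by omega⟩ := hsym _ _
  rw [hrow, keyfull (emb n hn i), Finset.mul_sum]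
  refine Finset.sum_congr rfl fun j _ => ?_
  show a i * Xh (emb n hn i) (emb n hn j) * a j = a i * (a j * Xh (emb n hn i) (emb n hn j))
  ring
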